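/- Let L₁ be an (n+1)×(n+1) tridiagonal matrix with nonnegative integer entries: diagonal (α₀,…,α_n) with α₀ = 0, superdiagonal (β₀,…,β_{n-1}) and subdiagonal (γ₁,…,γ_n), all β_{i-1}, γᵢ > 0, with αᵢ + βᵢ + γᵢ = β₀ for 1 ≤ i ≤ n, β_{i-1} ≥ βᵢ and γᵢ ≥ γ_{i-1} for all 1 ≤ i ≤ n. Fix an index i with 1 ≤ i ≤ n-1 and let ℓ := |{1 ≤ j ≤ n-1 : (γⱼ, αⱼ, βⱼ) = (γᵢ, αᵢ, βᵢ)}|. If ℓ ≥ 2, then L₁ has a real eigenvalue θ with αᵢ + 2√(βᵢγᵢ)cos(2π/(ℓ+1)) ≤ θ < β₀. -/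

import Mathlib

open Real

lemma sum_fin_ite {M : Type*} [AddCommMonoid M] (n c : ℕ) (g : Fin (n+1) → M) :
    ∑ j : Fin (n+1), (if (j:ℕ) = c then g j else 0) =
      if h : c < n + 1 then g ⟨c, h⟩ else 0 := by
  split_ifs with h
  · rw [Finset.sum_eq_single (⟨c, h⟩ : Fin (n+1))]
    · simp
    · intro b _ hb
      have : (b:ℕ) ≠ c := fun hc => hb (by ext; exact hc)
      simp [this]
    · intro hc; exact absurd (Finset.mem_univ _) hc
  · apply Finset.sum_eq_zero; intro j _
    have : (j:ℕ) ≠ c := by have := j.isLt; omega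
    simp [this]

lemma tri_mulVec (n : ℕ) (A B C : ℕ → ℝ) (M : Matrix (Fin (n+1)) (Fin (n+1)) ℝ)
    (hM : ∀ i j : Fin (n+1), M i j =
      if (j:ℕ) = (i:ℕ)+1 then B (i:ℕ) else if (i:ℕ) = (j:ℕ)+1 then C (i:ℕ)
      else if (i:ℕ) = (j:ℕ) then A (i:ℕ) else 0)
    (v : Fin (n+1) → ℝ) (i : Fin (n+1)) :
    M.mulVec v i =
      (if h : (i:ℕ)+1 < n+1 then B (i:ℕ) * v ⟨(i:ℕ)+1, h⟩ else 0) +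
      (if h : 1 ≤ (i:ℕ) then C (i:ℕ) * v ⟨(i:ℕ)-1, lt_of_le_of_lt (Nat.sub_le _ _) i.isLt⟩ else 0) +
      A (i:ℕ) * v i := by
  have hkey : ∀ j : Fin (n+1), M i j * v j =
      (if (j:ℕ) = (i:ℕ)+1 then B (i:ℕ) * v j else 0) +
      ((if (j:ℕ) = (i:ℕ)-1 ∧ 1 ≤ (i:ℕ) then C (i:ℕ) * v j else 0) +
      (if (j:ℕ) = (i:ℕ) then A (i:ℕ) * v j else 0)) := by
    intro j
    rw [hM i j]
    split_ifs <;> (first | ring1 | (exfalso; omega))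
  rw [Matrix.mulVec, dotProduct]
  simp only [hkey]
  rw [Finset.sum_add_distrib, Finset.sum_add_distrib]
  by_cases hi : 1 ≤ (i:ℕ)
  · have e : ∀ j : Fin (n+1), (((j:ℕ) = (i:ℕ)-1 ∧ 1 ≤ (i:ℕ))) = ((j:ℕ) = (i:ℕ)-1) := fun j => by
      simp [hi]
    simp only [e, dif_pos hi]
    rw [sum_fin_ite, sum_fin_ite, sum_fin_ite]
    have h3 : (i:ℕ) < n+1 := i.isLt
    have h2 : (i:ℕ)-1 < n+1 := lt_of_le_of_lt (Nat.sub_le _ _) i.isLt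
    rw [dif_pos h3, dif_pos h2, ← add_assoc]
  · simp only [hi, and_false, if_false, dif_neg hi]
    rw [sum_fin_ite, sum_fin_ite]
    have h3 : (i:ℕ) < n+1 := i.isLt
    rw [dif_pos h3]
    simp

set_option maxHeartbeats 2000000 in
theorem stmt_12 (n : ℕ) (hn : 2 ≤ n) (α β γ : ℕ → ℕ)
    (hα0 : α 0 = 0) (hγ0 : γ 0 = 0) (hβn : β n = 0)
    (hβpos : ∀ i, i ≤ n - 1 → 0 < β i)
    (hγpos : ∀ i, 1 ≤ i → i ≤ n → 0 < γ i)
    (hsum : ∀ i, 1 ≤ i → i ≤ n → α i + β i + γ i = β 0)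
    (hβmono : ∀ i, 1 ≤ i → i ≤ n → β i ≤ β (i - 1))
    (hγmono : ∀ i, 1 ≤ i → i ≤ n → γ (i - 1) ≤ γ i)
    (L : Matrix (Fin (n + 1)) (Fin (n + 1)) ℝ)
    (hL : ∀ i j : Fin (n + 1), L i j =
      if (j : ℕ) = (i : ℕ) + 1 then (β (i : ℕ) : ℝ)
      else if (i : ℕ) = (j : ℕ) + 1 then (γ (i : ℕ) : ℝ)
      else if (i : ℕ) = (j : ℕ) then (α (i : ℕ) : ℝ) else 0)
    (i₀ : ℕ) (hi₀1 : 1 ≤ i₀) (hi₀n : i₀ ≤ n - 1)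
    (ℓ : ℕ)
    (hℓ : ℓ = ((Finset.Icc 1 (n - 1)).filter
        (fun j => (γ j, α j, β j) = (γ i₀, α i₀, β i₀))).card)
    (hℓ2 : 2 ≤ ℓ) :
    ∃ θ : ℝ, Module.End.HasEigenvalue (Matrix.toLin' L) θ ∧
      (α i₀ : ℝ) + 2 * Real.sqrt ((β i₀ : ℝ) * (γ i₀ : ℝ)) * Real.cos (2 * π / (ℓ + 1)) ≤ θ ∧
      θ < (β 0 : ℝ) := by
  -- basic notation
  set r : ℝ := Real.sqrt ((β i₀ : ℝ) * (γ i₀ : ℝ)) with hr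
  set m : ℝ := (ℓ : ℝ) + 1 with hm
  set lam2 : ℝ := (α i₀ : ℝ) + 2 * r * Real.cos (2 * π / m) with hlam2
  set lam1 : ℝ := (α i₀ : ℝ) + 2 * r * Real.cos (π / m) with hlam1
  set d : ℕ → ℝ := fun i => ∏ k ∈ Finset.range i, Real.sqrt ((β k : ℝ)/(γ (k+1) : ℝ)) with hd
  set bS : ℕ → ℝ := fun i => Real.sqrt ((β i : ℝ) * (γ (i+1) : ℝ)) with hbS
  set cS : ℕ → ℝ := fun i => Real.sqrt ((β (i-1) : ℝ) * (γ i : ℝ)) with hcS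
  set S : Matrix (Fin (n+1)) (Fin (n+1)) ℝ := Matrix.of fun i j =>
      if (j:ℕ) = (i:ℕ)+1 then bS (i:ℕ) else if (i:ℕ) = (j:ℕ)+1 then cS (i:ℕ)
      else if (i:ℕ) = (j:ℕ) then (α (i:ℕ) : ℝ) else 0 with hSdef
  have hS : ∀ i j : Fin (n+1), S i j =
      if (j:ℕ) = (i:ℕ)+1 then bS (i:ℕ) else if (i:ℕ) = (j:ℕ)+1 then cS (i:ℕ)
      else if (i:ℕ) = (j:ℕ) then (α (i:ℕ) : ℝ) else 0 := fun i j => rfl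
  set dot : (Fin (n+1) → ℝ) → (Fin (n+1) → ℝ) → ℝ := fun x y => ∑ j, x j * y j with hdot
  set w : Fin (n+1) → ℝ := fun j => d (j:ℕ) with hw
  -- positivity facts
  have hβ0 : 0 < (β 0 : ℝ) := by exact_mod_cast hβpos 0 (Nat.zero_le _)
  have hdpos : ∀ i, i ≤ n → 0 < d i := by
    intro i hi
    rw [hd]
    apply Finset.prod_pos
    intro k hk
    rw [Finset.mem_range] at hk
    have hb : 0 < β k := hβpos k (by omega)
    have hg : 0 < γ (k+1) := hγpos (k+1) (by omega) (by omega)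
    apply Real.sqrt_pos.mpr
    apply div_pos
    · exact_mod_cast hb
    · exact_mod_cast hg
  have hstep : ∀ k : ℕ, d (k+1) = d k * Real.sqrt ((β k : ℝ)/(γ (k+1) : ℝ)) := by
    intro k
    rw [hd]
    exact Finset.prod_range_succ _ k
  have hkey1 : ∀ k, k < n → bS k * d (k+1) = (β k : ℝ) * d k := by
    intro k hk
    have hg : (0:ℝ) < (γ (k+1) : ℝ) := by
      exact_mod_cast hγpos (k+1) (by omega) (by omega)
    rw [hstep k, hbS]
    rw [show Real.sqrt ((β k:ℝ) * (γ (k+1):ℝ)) * (d k * Real.sqrt ((β k:ℝ)/(γ (k+1):ℝ)))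
        = d k * (Real.sqrt ((β k:ℝ) * (γ (k+1):ℝ)) * Real.sqrt ((β k:ℝ)/(γ (k+1):ℝ))) by ring]
    rw [← Real.sqrt_mul (by positivity)]
    rw [show (β k:ℝ) * (γ (k+1):ℝ) * ((β k:ℝ)/(γ (k+1):ℝ)) = (β k:ℝ)^2 by
      field_simp]
    rw [Real.sqrt_sq (by positivity)]
    ring
  have hkey2 : ∀ k, 1 ≤ k → k ≤ n → cS k * d (k-1) = (γ k : ℝ) * d k := by
    intro k hk1 hkn
    have hg : (0:ℝ) < (γ k : ℝ) := by exact_mod_cast hγpos k hk1 hkn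
    have hd' : d k = d (k-1) * Real.sqrt ((β (k-1) : ℝ)/(γ k : ℝ)) := by
      have := hstep (k-1)
      rw [show k-1+1 = k by omega] at this
      exact this
    have hsq : Real.sqrt ((β (k-1):ℝ) * (γ k:ℝ)) = (γ k:ℝ) * Real.sqrt ((β (k-1):ℝ)/(γ k:ℝ)) := by
      rw [show ((β (k-1):ℝ) * (γ k:ℝ)) = ((β (k-1):ℝ)/(γ k:ℝ)) * (γ k:ℝ)^2 by field_simp]
      rw [Real.sqrt_mul (by positivity), Real.sqrt_sq (by positivity)]
      ring
    simp only [hcS]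
    rw [hsq, hd']
    ring
  have hdne : ∀ j : Fin (n+1), d (j:ℕ) ≠ 0 := fun j => ne_of_gt (hdpos _ (by omega))
  -- transfer of eigenvectors from S to L
  have htrans : ∀ (μ : ℝ) (v : Fin (n+1) → ℝ), S.mulVec v = μ • v →
      L.mulVec (fun j : Fin (n+1) => (d (j:ℕ))⁻¹ * v j) = μ • fun j : Fin (n+1) => (d (j:ℕ))⁻¹ * v j := by
    intro μ v hv
    funext i
    have hSi := congrFun hv i
    rw [tri_mulVec n (fun k => (α k:ℝ)) bS cS S hS v i] at hSi
    have hSi' : (if h : (i:ℕ)+1 < n+1 then bS (i:ℕ) * v ⟨(i:ℕ)+1, h⟩ else 0) +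
        (if h : 1 ≤ (i:ℕ) then cS (i:ℕ) * v ⟨(i:ℕ)-1, lt_of_le_of_lt (Nat.sub_le _ _) i.isLt⟩ else 0) +
        (α (i:ℕ) : ℝ) * v i = μ * v i := by
      rw [hSi]; rfl
    rw [tri_mulVec n (fun k => (α k:ℝ)) (fun k => (β k:ℝ)) (fun k => (γ k:ℝ)) L hL]
    show _ = μ * ((d ((i:Fin (n+1)):ℕ))⁻¹ * v i)
    have hdi : d (i:ℕ) ≠ 0 := hdne i
    by_cases h1 : (i:ℕ)+1 < n+1
    · have hdsu : d ((i:ℕ)+1) ≠ 0 := ne_of_gt (hdpos _ (by omega))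
      have e1 : (β (i:ℕ) : ℝ) * (d ((i:ℕ)+1))⁻¹ = (d (i:ℕ))⁻¹ * bS (i:ℕ) := by
        field_simp
        linear_combination - hkey1 (i:ℕ) (by omega)
      by_cases h2 : 1 ≤ (i:ℕ)
      · have hdpr : d ((i:ℕ)-1) ≠ 0 := ne_of_gt (hdpos _ (by omega))
        have e2 : (γ (i:ℕ) : ℝ) * (d ((i:ℕ)-1))⁻¹ = (d (i:ℕ))⁻¹ * cS (i:ℕ) := by
          field_simp
          linear_combination - hkey2 (i:ℕ) h2 (by omega)
        rw [dif_pos h1, dif_pos h2]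
        rw [dif_pos h1, dif_pos h2] at hSi'
        linear_combination v ⟨(i:ℕ)+1, h1⟩ * e1 +
          v ⟨(i:ℕ)-1, lt_of_le_of_lt (Nat.sub_le _ _) i.isLt⟩ * e2 + (d (i:ℕ))⁻¹ * hSi'
      · rw [dif_pos h1, dif_neg h2]
        rw [dif_pos h1, dif_neg h2] at hSi'
        linear_combination v ⟨(i:ℕ)+1, h1⟩ * e1 + (d (i:ℕ))⁻¹ * hSi'
    · by_cases h2 : 1 ≤ (i:ℕ)
      · have hdpr : d ((i:ℕ)-1) ≠ 0 := ne_of_gt (hdpos _ (by omega))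
        have e2 : (γ (i:ℕ) : ℝ) * (d ((i:ℕ)-1))⁻¹ = (d (i:ℕ))⁻¹ * cS (i:ℕ) := by
          field_simp
          linear_combination - hkey2 (i:ℕ) h2 (by omega)
        rw [dif_neg h1, dif_pos h2]
        rw [dif_neg h1, dif_pos h2] at hSi'
        linear_combination v ⟨(i:ℕ)-1, lt_of_le_of_lt (Nat.sub_le _ _) i.isLt⟩ * e2 +
          (d (i:ℕ))⁻¹ * hSi'
      · rw [dif_neg h1, dif_neg h2]
        rw [dif_neg h1, dif_neg h2] at hSi'
        linear_combination (d (i:ℕ))⁻¹ * hSi'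
  -- S has eigenvector w with eigenvalue β 0
  have hwS : S.mulVec w = (β 0 : ℝ) • w := by
    funext i
    rw [tri_mulVec n (fun k => (α k:ℝ)) bS cS S hS w i]
    show _ = (β 0 : ℝ) * d (i:ℕ)
    have hT1 : (if h : (i:ℕ)+1 < n+1 then bS (i:ℕ) * w ⟨(i:ℕ)+1, h⟩ else 0)
        = (β (i:ℕ) : ℝ) * d (i:ℕ) := by
      by_cases h1 : (i:ℕ)+1 < n+1
      · rw [dif_pos h1]
        exact hkey1 (i:ℕ) (by omega)
      · rw [dif_neg h1]
        have : (i:ℕ) = n := by have := i.isLt; omega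
        rw [this, hβn]
        simp
    have hT2 : (if h : 1 ≤ (i:ℕ) then cS (i:ℕ) * w ⟨(i:ℕ)-1, lt_of_le_of_lt (Nat.sub_le _ _) i.isLt⟩ else 0)
        = (γ (i:ℕ) : ℝ) * d (i:ℕ) := by
      by_cases h2 : 1 ≤ (i:ℕ)
      · rw [dif_pos h2]
        exact hkey2 (i:ℕ) h2 (by omega)
      · rw [dif_neg h2]
        have : (i:ℕ) = 0 := by omega
        rw [this, hγ0]
        simp
    rw [hT1, hT2]
    by_cases h2 : 1 ≤ (i:ℕ)
    · have := hsum (i:ℕ) h2 (by have := i.isLt; omega)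
      have hc : (α (i:ℕ) : ℝ) + (β (i:ℕ) : ℝ) + (γ (i:ℕ) : ℝ) = (β 0 : ℝ) := by
        exact_mod_cast congrArg (fun t : ℕ => (t : ℝ)) this
      linear_combination d (i:ℕ) * hc
    · have : (i:ℕ) = 0 := by omega
      rw [this, hγ0, hα0]
      simp
  -- row sums of L
  have hrow : L.mulVec (fun _ => (1:ℝ)) = (β 0 : ℝ) • fun _ => (1:ℝ) := by
    funext i
    rw [tri_mulVec n (fun k => (α k:ℝ)) (fun k => (β k:ℝ)) (fun k => (γ k:ℝ)) L hL]
    show _ = (β 0 : ℝ) * 1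
    have hT1 : (if h : (i:ℕ)+1 < n+1 then (β (i:ℕ):ℝ) * (fun _ : Fin (n+1) => (1:ℝ)) ⟨(i:ℕ)+1, h⟩ else 0)
        = (β (i:ℕ) : ℝ) := by
      by_cases h1 : (i:ℕ)+1 < n+1
      · rw [dif_pos h1]; ring
      · rw [dif_neg h1]
        have : (i:ℕ) = n := by have := i.isLt; omega
        rw [this, hβn]
        simp
    have hT2 : (if h : 1 ≤ (i:ℕ) then (γ (i:ℕ):ℝ) * (fun _ : Fin (n+1) => (1:ℝ)) ⟨(i:ℕ)-1, lt_of_le_of_lt (Nat.sub_le _ _) i.isLt⟩ else 0)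
        = (γ (i:ℕ) : ℝ) := by
      by_cases h2 : 1 ≤ (i:ℕ)
      · rw [dif_pos h2]; ring
      · rw [dif_neg h2]
        have : (i:ℕ) = 0 := by omega
        rw [this, hγ0]
        simp
    rw [hT1, hT2]
    by_cases h2 : 1 ≤ (i:ℕ)
    · have := hsum (i:ℕ) h2 (by have := i.isLt; omega)
      have hc : (α (i:ℕ) : ℝ) + (β (i:ℕ) : ℝ) + (γ (i:ℕ) : ℝ) = (β 0 : ℝ) := by
        exact_mod_cast congrArg (fun t : ℕ => (t : ℝ)) this
      linear_combination hc
    · have : (i:ℕ) = 0 := by omega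
      rw [this, hγ0, hα0]
      simp
  -- simplicity of the eigenvalue β 0 of L
  have hsimple : ∀ u : Fin (n+1) → ℝ, L.mulVec u = (β 0 : ℝ) • u → ∀ j, u j = u 0 := by
    intro u huu j
    set z : Fin (n+1) → ℝ := fun k => u k - u 0 with hzdef
    have h1 : z = u - (u 0) • (fun _ : Fin (n+1) => (1:ℝ)) := by
      funext k
      simp [hzdef]
    have hLz : L.mulVec z = (β 0:ℝ) • z := by
      rw [h1, Matrix.mulVec_sub, Matrix.mulVec_smul, huu, hrow]
      funext k
      simp
      ring
    have hzero : ∀ k : ℕ, ∀ hk : k < n+1, z ⟨k, hk⟩ = 0 := by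
      intro k
      induction k using Nat.strong_induction_on with
      | _ k ih =>
        intro hk
        match k, hk with
        | 0, hk => simp [hzdef]
        | (kk+1), hk =>
          have hrowk := congrFun hLz ⟨kk, by omega⟩
          rw [tri_mulVec n (fun t => (α t:ℝ)) (fun t => (β t:ℝ)) (fun t => (γ t:ℝ)) L hL] at hrowk
          have hsm : ((β 0:ℝ) • z) ⟨kk, by omega⟩ = (β 0:ℝ) * z ⟨kk, by omega⟩ := rfl
          rw [hsm] at hrowk
          have hz0 : z ⟨kk, by omega⟩ = 0 := ih kk (by omega) (by omega)
          rw [dif_pos (show kk+1 < n+1 by omega)] at hrowk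
          have hT2 : (if h : 1 ≤ ((⟨kk, by omega⟩ : Fin (n+1)):ℕ) then
              (γ ((⟨kk, by omega⟩ : Fin (n+1)):ℕ):ℝ) * z ⟨((⟨kk, by omega⟩ : Fin (n+1)):ℕ)-1,
                lt_of_le_of_lt (Nat.sub_le _ _) (Fin.isLt _)⟩ else 0) = 0 := by
            by_cases h2 : 1 ≤ kk
            · rw [dif_pos h2]
              have := ih (kk-1) (by omega) (by omega)
              show (γ kk : ℝ) * z ⟨kk-1, by omega⟩ = 0
              rw [this]
              ring
            · have : kk = 0 := by omega
              subst this
              simp [hγ0]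
          rw [hT2, hz0] at hrowk
          have hβkk : (0:ℝ) < (β kk : ℝ) := by
            exact_mod_cast hβpos kk (by omega)
          have : (β kk : ℝ) * z ⟨kk+1, by omega⟩ = 0 := by linarith [hrowk]
          have := mul_eq_zero.mp this
          rcases this with h' | h'
          · exact absurd h' (ne_of_gt hβkk)
          · exact h'
    have := hzero (j:ℕ) j.isLt
    have hj : z j = 0 := by
      have : (⟨(j:ℕ), j.isLt⟩ : Fin (n+1)) = j := Fin.eta j j.isLt
      rw [← this]
      exact hzero (j:ℕ) j.isLt
    have : u j - u 0 = 0 := hj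
    linarith
  -- any real eigenvalue of L is at most β 0
  have hLnn : ∀ i j : Fin (n+1), 0 ≤ L i j := by
    intro i j
    rw [hL]
    split_ifs <;> positivity
  have hrowsum : ∀ i : Fin (n+1), ∑ j, L i j = (β 0 : ℝ) := by
    intro i
    have := congrFun hrow i
    simpa [Matrix.mulVec, dotProduct] using this
  have hbound : ∀ (μ : ℝ) (u : Fin (n+1) → ℝ), u ≠ 0 → L.mulVec u = μ • u → μ ≤ (β 0 : ℝ) := by
    intro μ u hu0 huL
    obtain ⟨i, _, hmax⟩ := Finset.exists_max_image Finset.univ (fun j => |u j|)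
      ⟨0, Finset.mem_univ 0⟩
    have hui : 0 < |u i| := by
      have hex : ∃ j, u j ≠ 0 := by
        by_contra hc
        push_neg at hc
        exact hu0 (funext fun j => hc j)
      obtain ⟨j, hj⟩ := hex
      calc (0:ℝ) < |u j| := abs_pos.mpr hj
        _ ≤ |u i| := hmax j (Finset.mem_univ j)
    have h1 : (L.mulVec u) i = μ * u i := by
      rw [huL]; rfl
    have h2 : |(L.mulVec u) i| ≤ (β 0:ℝ) * |u i| := by
      rw [Matrix.mulVec, dotProduct]
      calc |∑ j, L i j * u j| ≤ ∑ j, |L i j * u j| := Finset.abs_sum_le_sum_abs _ _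
        _ = ∑ j, L i j * |u j| := by
            apply Finset.sum_congr rfl
            intro j _
            rw [abs_mul, abs_of_nonneg (hLnn i j)]
        _ ≤ ∑ j, L i j * |u i| := by
            apply Finset.sum_le_sum
            intro j _
            exact mul_le_mul_of_nonneg_left (hmax j (Finset.mem_univ j)) (hLnn i j)
        _ = (∑ j, L i j) * |u i| := by rw [Finset.sum_mul]
        _ = (β 0:ℝ) * |u i| := by rw [hrowsum i]
    have h3 : |μ| * |u i| ≤ (β 0:ℝ) * |u i| := by
      rw [← abs_mul, ← h1]
      exact h2
    have h4 : |μ| ≤ (β 0:ℝ) := le_of_mul_le_mul_right h3 hui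
    exact le_trans (le_abs_self μ) h4
  -- symmetry of S at the level of dot products
  have hstS : ∀ i j : Fin (n+1), S j i = S i j := by
    intro i j
    rw [hS, hS]
    by_cases h1 : (i:ℕ) = (j:ℕ)+1
    · rw [if_pos h1, if_neg (by omega : ¬ (j:ℕ) = (i:ℕ)+1), if_pos h1]
      simp only [hbS, hcS]
      have e : (i:ℕ) - 1 = (j:ℕ) := by omega
      rw [e, h1]
    · by_cases h2 : (j:ℕ) = (i:ℕ)+1
      · rw [if_neg h1, if_pos h2, if_pos h2]
        simp only [hbS, hcS]
        have e : (j:ℕ) - 1 = (i:ℕ) := by omega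
        rw [e, h2]
      · rw [if_neg h1, if_neg h2, if_neg h2, if_neg h1]
        by_cases h3 : (i:ℕ) = (j:ℕ)
        · rw [if_pos h3.symm, if_pos h3, h3]
        · rw [if_neg (fun hc => h3 hc.symm), if_neg h3]
  have hdsymm : ∀ x y : Fin (n+1) → ℝ, dot x (S.mulVec y) = dot (S.mulVec x) y := by
    intro x y
    rw [hdot]
    simp only [Matrix.mulVec, dotProduct, Finset.mul_sum, Finset.sum_mul]
    rw [Finset.sum_comm]
    apply Finset.sum_congr rfl
    intro i _
    apply Finset.sum_congr rfl
    intro j _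
    rw [hstS j i]
    ring
  -- dot product basics
  have hdot_pos : ∀ x : Fin (n+1) → ℝ, x ≠ 0 → 0 < dot x x := by
    intro z hz
    have hex : ∃ j, z j ≠ 0 := by
      by_contra hc
      push_neg at hc
      exact hz (funext fun j => hc j)
    obtain ⟨j, hj⟩ := hex
    rw [hdot]
    calc (0:ℝ) < z j * z j := mul_self_pos.mpr hj
      _ ≤ ∑ k, z k * z k :=
        Finset.single_le_sum (fun k _ => mul_self_nonneg (z k)) (Finset.mem_univ j)
  -- the test vector
  have hdot_comm : ∀ x y : Fin (n+1) → ℝ, dot x y = dot y x := by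
    intro x y
    rw [hdot]
    apply Finset.sum_congr rfl
    intro j _
    ring
  have hdot_expand : ∀ (c1 c2 : ℝ) (y1 y2 z : Fin (n+1) → ℝ),
      dot (c1 • y1 - c2 • y2) z = c1 * dot y1 z - c2 * dot y2 z := by
    intro c1 c2 y1 y2 z
    rw [hdot]
    simp only [Pi.sub_apply, Pi.smul_apply, smul_eq_mul, sub_mul]
    rw [Finset.sum_sub_distrib, Finset.mul_sum, Finset.mul_sum]
    congr 1 <;> (apply Finset.sum_congr rfl; intro j _; ring)
  obtain ⟨x, hx0, hxw, hxS⟩ : ∃ x : Fin (n+1) → ℝ, x ≠ 0 ∧ dot w x = 0 ∧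
      lam2 * dot x x ≤ dot x (S.mulVec x) := by
    -- the block of equal rows
    set F := (Finset.Icc 1 (n-1)).filter
        (fun j => (γ j, α j, β j) = (γ i₀, α i₀, β i₀)) with hF
    have hi₀F : i₀ ∈ F := by
      rw [hF, Finset.mem_filter]
      exact ⟨Finset.mem_Icc.mpr ⟨hi₀1, hi₀n⟩, rfl⟩
    have hFne : F.Nonempty := ⟨i₀, hi₀F⟩
    set a := F.min' hFne with ha
    set b := F.max' hFne with hb
    have hspec : ∀ j ∈ F, 1 ≤ j ∧ j ≤ n-1 ∧ γ j = γ i₀ ∧ α j = α i₀ ∧ β j = β i₀ := by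
      intro j hj
      rw [hF, Finset.mem_filter, Finset.mem_Icc] at hj
      obtain ⟨⟨h1, h2⟩, h3⟩ := hj
      rw [Prod.mk.injEq, Prod.mk.injEq] at h3
      exact ⟨h1, h2, h3.1, h3.2.1, h3.2.2⟩
    have haF := F.min'_mem hFne
    have hbF := F.max'_mem hFne
    obtain ⟨ha1, han, hγa, hαa, hβa⟩ := hspec a haF
    obtain ⟨hb1, hbn, hγb, hαb, hβb⟩ := hspec b hbF
    have hai : a ≤ i₀ := F.min'_le i₀ hi₀F
    have hib : i₀ ≤ b := F.le_max' i₀ hi₀F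
    -- monotonicity chains
    have hchain : ∀ p q : ℕ, 1 ≤ p → p ≤ q → q ≤ n → β q ≤ β p ∧ γ p ≤ γ q := by
      intro p q hp hpq hqn
      induction q with
      | zero => omega
      | succ qq ih =>
        rcases Nat.lt_or_ge p (qq+1) with hlt | hge
        · have hih := ih (by omega) (by omega)
          have h1 := hβmono (qq+1) (by omega) hqn
          have h2 := hγmono (qq+1) (by omega) hqn
          simp only [Nat.add_sub_cancel] at h1 h2
          exact ⟨le_trans h1 hih.1, le_trans hih.2 h2⟩
        · have : p = qq+1 := by omega
          subst this
          exact ⟨le_refl _, le_refl _⟩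
    have hval : ∀ mm, a ≤ mm → mm ≤ b → β mm = β i₀ ∧ γ mm = γ i₀ ∧ α mm = α i₀ := by
      intro mm h1 h2
      have hc1 := hchain a mm ha1 h1 (by omega)
      have hc2 := hchain mm b (by omega) h2 (by omega)
      have hβm : β mm = β i₀ := by omega
      have hγm : γ mm = γ i₀ := by omega
      have hαm : α mm = α i₀ := by
        have e1 := hsum mm (by omega) (by omega)
        have e2 := hsum i₀ hi₀1 (by omega)
        omega
      exact ⟨hβm, hγm, hαm⟩
    have hℓab : ℓ = b + 1 - a := by
      have hFeq : F = Finset.Icc a b := by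
        apply Finset.ext
        intro j
        constructor
        · intro hj
          exact Finset.mem_Icc.mpr ⟨F.min'_le j hj, F.le_max' j hj⟩
        · intro hj
          rw [Finset.mem_Icc] at hj
          obtain ⟨hβm, hγm, hαm⟩ := hval j hj.1 hj.2
          rw [hF, Finset.mem_filter]
          refine ⟨Finset.mem_Icc.mpr ⟨by omega, by omega⟩, ?_⟩
          rw [hγm, hαm, hβm]
        
      rw [hℓ, hFeq, Nat.card_Icc]
    have hba : b + 1 = a + ℓ := by omega
    -- trigonometric eigenvectors
    set sθ : ℕ → ℕ → ℝ := fun k p => Real.sin ((k:ℝ) * π * (p:ℝ) / m) with hsθ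
    set uvec : ℕ → Fin (n+1) → ℝ := fun k j =>
      if a ≤ (j:ℕ) ∧ (j:ℕ) ≤ b then sθ k ((j:ℕ) - a + 1) else 0 with huvec
    set lamf : ℕ → ℝ := fun k => (α i₀ : ℝ) + 2*r*Real.cos ((k:ℝ)*π/m) with hlamf
    have hm3 : (3:ℝ) ≤ m := by
      rw [hm]
      have : (3:ℕ) ≤ ℓ + 1 := by omega
      exact_mod_cast this
    have hmpos : (0:ℝ) < m := by linarith
    have hrpos : 0 < r := by
      rw [hr]
      apply Real.sqrt_pos.mpr
      have h1 : 0 < β i₀ := hβpos i₀ hi₀n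
      have h2 : 0 < γ i₀ := hγpos i₀ hi₀1 (by omega)
      have h1' : (0:ℝ) < (β i₀ : ℝ) := by exact_mod_cast h1
      have h2' : (0:ℝ) < (γ i₀ : ℝ) := by exact_mod_cast h2
      positivity
    have htrig : ∀ k p : ℕ, sθ k p + sθ k (p+2) = 2 * Real.cos ((k:ℝ)*π/m) * sθ k (p+1) := by
      intro k p
      rw [hsθ]
      show Real.sin ((k:ℝ) * π * (p:ℝ) / m) + Real.sin ((k:ℝ) * π * ((p:ℕ)+2 : ℕ) / m)
        = 2 * Real.cos ((k:ℝ)*π/m) * Real.sin ((k:ℝ) * π * ((p:ℕ)+1 : ℕ) / m)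
      push_cast
      rw [show (k:ℝ) * π * ((p:ℝ)+2) / m
          = ((k:ℝ) * π * ((p:ℝ)+1)/m) + ((k:ℝ)*π/m) by ring,
        show (k:ℝ) * π * (p:ℝ) / m
          = ((k:ℝ) * π * ((p:ℝ)+1)/m) - ((k:ℝ)*π/m) by ring,
        Real.sin_add, Real.sin_sub]
      ring
    have hs0 : ∀ k, sθ k 0 = 0 := by
      intro k
      rw [hsθ]
      show Real.sin ((k:ℝ) * π * ((0:ℕ):ℝ) / m) = 0
      norm_num
    have hsl : ∀ k, sθ k (ℓ+1) = 0 := by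
      intro k
      rw [hsθ]
      show Real.sin ((k:ℝ) * π * ((ℓ+1 : ℕ):ℝ) / m) = 0
      rw [hm]
      have hne : ((ℓ:ℝ) + 1) ≠ 0 := by positivity
      rw [show (k:ℝ) * π * ((ℓ+1 : ℕ):ℝ) / ((ℓ:ℝ)+1) = (k:ℝ) * π by
        push_cast
        field_simp]
      exact Real.sin_nat_mul_pi k
    -- the eigen-relation on the block
    have hSuk : ∀ k : ℕ, ∀ j : Fin (n+1), a ≤ (j:ℕ) → (j:ℕ) ≤ b →
        (S.mulVec (uvec k)) j = lamf k * uvec k j := by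
      intro k j hja hjb
      have hjn : (j:ℕ) ≤ n - 1 := by omega
      rw [tri_mulVec n (fun t => (α t:ℝ)) bS cS S hS (uvec k) j]
      have hj1 : (j:ℕ)+1 < n+1 := by omega
      have hj0 : 1 ≤ (j:ℕ) := by omega
      rw [dif_pos hj1, dif_pos hj0]
      obtain ⟨hβj, hγj, hαj⟩ := hval (j:ℕ) hja hjb
      set t : ℕ := (j:ℕ) - a with ht
      have hjt : (j:ℕ) = a + t := by omega
      have hutj : uvec k j = sθ k (t+1) := by
        rw [huvec]
        show (if a ≤ (j:ℕ) ∧ (j:ℕ) ≤ b then sθ k ((j:ℕ) - a + 1) else 0) = sθ k (t+1)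
        rw [if_pos ⟨hja, hjb⟩]
      have hA1 : bS (j:ℕ) * uvec k ⟨(j:ℕ)+1, hj1⟩ = r * sθ k (t+2) := by
        rcases Nat.lt_or_ge (j:ℕ) b with hlt | hge
        · obtain ⟨hβj1, hγj1, hαj1⟩ := hval ((j:ℕ)+1) (by omega) (by omega)
          have h1 : uvec k ⟨(j:ℕ)+1, hj1⟩ = sθ k (t+2) := by
            rw [huvec]
            show (if a ≤ (j:ℕ)+1 ∧ (j:ℕ)+1 ≤ b then sθ k ((j:ℕ)+1 - a + 1) else 0) = sθ k (t+2)
            rw [if_pos ⟨by omega, by omega⟩]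
            congr 1
            omega
          have h2 : bS (j:ℕ) = r := by
            simp only [hbS]
            rw [hβj, hγj1, hr]
          rw [h1, h2]
        · have hjb' : (j:ℕ) = b := by omega
          have h1 : uvec k ⟨(j:ℕ)+1, hj1⟩ = 0 := by
            rw [huvec]
            show (if a ≤ (j:ℕ)+1 ∧ (j:ℕ)+1 ≤ b then sθ k ((j:ℕ)+1 - a + 1) else 0) = 0
            rw [if_neg (by omega)]
          have h2 : sθ k (t+2) = 0 := by
            have : t + 2 = ℓ + 1 := by omega
            rw [this]
            exact hsl k
          rw [h1, h2]
          ring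
      have hA2 : cS (j:ℕ) * uvec k ⟨(j:ℕ)-1, lt_of_le_of_lt (Nat.sub_le _ _) j.isLt⟩
          = r * sθ k t := by
        rcases Nat.lt_or_ge a (j:ℕ) with hlt | hge
        · obtain ⟨hβj1, hγj1, hαj1⟩ := hval ((j:ℕ)-1) (by omega) (by omega)
          have h1 : uvec k ⟨(j:ℕ)-1, lt_of_le_of_lt (Nat.sub_le _ _) j.isLt⟩ = sθ k t := by
            rw [huvec]
            show (if a ≤ (j:ℕ)-1 ∧ (j:ℕ)-1 ≤ b then sθ k ((j:ℕ)-1 - a + 1) else 0) = sθ k t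
            rw [if_pos ⟨by omega, by omega⟩]
            congr 1
            omega
          have h2 : cS (j:ℕ) = r := by
            simp only [hcS]
            rw [hβj1, hγj, hr]
          rw [h1, h2]
        · have hja' : (j:ℕ) = a := by omega
          have h1 : uvec k ⟨(j:ℕ)-1, lt_of_le_of_lt (Nat.sub_le _ _) j.isLt⟩ = 0 := by
            rw [huvec]
            show (if a ≤ (j:ℕ)-1 ∧ (j:ℕ)-1 ≤ b then sθ k ((j:ℕ)-1 - a + 1) else 0) = 0
            rw [if_neg (by omega)]
          have h2 : sθ k t = 0 := by
            have : t = 0 := by omega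
            rw [this]
            exact hs0 k
          rw [h1, h2]
          ring
      rw [hA1, hA2, hutj, hαj, hlamf]
      have := htrig k t
      linear_combination r * this
    -- dot products with uvec
    have hdotu : ∀ k k' : ℕ, dot (uvec k') (S.mulVec (uvec k)) = lamf k * dot (uvec k') (uvec k) := by
      intro k k'
      rw [hdot]
      show (∑ j, uvec k' j * (S.mulVec (uvec k)) j) = lamf k * ∑ j, uvec k' j * uvec k j
      rw [Finset.mul_sum]
      apply Finset.sum_congr rfl
      intro j _
      by_cases hcond : a ≤ (j:ℕ) ∧ (j:ℕ) ≤ b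
      · rw [hSuk k j hcond.1 hcond.2]
        ring
      · have h0 : uvec k' j = 0 := by
          rw [huvec]
          show (if a ≤ (j:ℕ) ∧ (j:ℕ) ≤ b then sθ k' ((j:ℕ) - a + 1) else 0) = 0
          rw [if_neg hcond]
        rw [h0]
        ring
    -- nonzero and positivity of uvec
    have hja : a < n+1 := by omega
    have huval : ∀ k : ℕ, 1 ≤ k → k ≤ 2 → 0 < uvec k ⟨a, hja⟩ := by
      intro k hk1 hk2
      have : uvec k ⟨a, hja⟩ = sθ k 1 := by
        rw [huvec]
        show (if a ≤ a ∧ a ≤ b then sθ k (a - a + 1) else 0) = sθ k 1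
        rw [if_pos ⟨le_refl a, by omega⟩]
        congr 1
        omega
      rw [this, hsθ]
      show (0:ℝ) < Real.sin ((k:ℝ) * π * ((1:ℕ):ℝ) / m)
      apply Real.sin_pos_of_pos_of_lt_pi
      · have hk : (0:ℝ) < (k:ℝ) := by exact_mod_cast hk1
        have := Real.pi_pos
        push_cast
        rw [mul_one]
        positivity
      · have hk : (k:ℝ) ≤ 2 := by exact_mod_cast hk2
        have hπ := Real.pi_pos
        push_cast
        rw [mul_one, div_lt_iff₀ hmpos]
        nlinarith
    have hun0 : ∀ k : ℕ, 1 ≤ k → k ≤ 2 → uvec k ≠ 0 := by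
      intro k hk1 hk2 hzz
      have := huval k hk1 hk2
      rw [hzz] at this
      simp at this
    have hN1 : 0 < dot (uvec 1) (uvec 1) := hdot_pos _ (hun0 1 (by norm_num) (by norm_num))
    have hN2 : 0 < dot (uvec 2) (uvec 2) := hdot_pos _ (hun0 2 (by norm_num) (by norm_num))
    -- lamf values
    have hlamf1 : lamf 1 = lam1 := by
      rw [hlamf, hlam1]
      norm_num
    have hlamf2 : lamf 2 = lam2 := by
      rw [hlamf, hlam2]
      norm_num
    have hcoslt : Real.cos (2*π/m) < Real.cos (π/m) := by
      apply Real.cos_lt_cos_of_nonneg_of_le_pi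
      · positivity
      · rw [div_le_iff₀ hmpos]
        nlinarith [Real.pi_pos]
      · rw [div_lt_div_iff₀ hmpos hmpos]
        nlinarith [Real.pi_pos]
    have hlam21 : lam2 < lam1 := by
      rw [hlam1, hlam2]
      have : 2*r*Real.cos (2*π/m) < 2*r*Real.cos (π/m) := by
        apply mul_lt_mul_of_pos_left hcoslt
        linarith
      linarith
    -- orthogonality
    have hu1u2 : dot (uvec 1) (uvec 2) = 0 := by
      have h1 := hdotu 2 1
      have h2 := hdotu 1 2
      have h3 : dot (uvec 1) (S.mulVec (uvec 2)) = dot (uvec 2) (S.mulVec (uvec 1)) := by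
        rw [hdsymm (uvec 1) (uvec 2)]
        exact hdot_comm _ _
      rw [h1, h2] at h3
      have h4 : dot (uvec 2) (uvec 1) = dot (uvec 1) (uvec 2) := hdot_comm _ _
      rw [h4] at h3
      have h5 : (lamf 2 - lamf 1) * dot (uvec 1) (uvec 2) = 0 := by linarith
      rcases mul_eq_zero.mp h5 with h' | h'
      · exfalso
        rw [hlamf1, hlamf2] at h'
        have : lam2 = lam1 := by linarith
        linarith
      · exact h'
    have hu2u1 : dot (uvec 2) (uvec 1) = 0 := by
      rw [hdot_comm]
      exact hu1u2
    -- choose the test vector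
    set p1 : ℝ := dot w (uvec 1) with hp1
    set p2 : ℝ := dot w (uvec 2) with hp2
    by_cases hp : p1 = 0 ∧ p2 = 0
    · refine ⟨uvec 1, hun0 1 (by norm_num) (by norm_num), hp.1, ?_⟩
      have := hdotu 1 1
      rw [this, hlamf1]
      have : lam2 * dot (uvec 1) (uvec 1) ≤ lam1 * dot (uvec 1) (uvec 1) := by
        apply mul_le_mul_of_nonneg_right (le_of_lt hlam21) (le_of_lt hN1)
      linarith
    · set x : Fin (n+1) → ℝ := p2 • uvec 1 - p1 • uvec 2 with hx
      have hxu1 : dot x (uvec 1) = p2 * dot (uvec 1) (uvec 1) := by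
        rw [hx, hdot_expand, hu2u1]
        ring
      have hxu2 : dot x (uvec 2) = - p1 * dot (uvec 2) (uvec 2) := by
        rw [hx, hdot_expand, hu1u2]
        ring
      have hxx : dot x x = p2^2 * dot (uvec 1) (uvec 1) + p1^2 * dot (uvec 2) (uvec 2) := by
        have h1 : dot x x = p2 * dot (uvec 1) x - p1 * dot (uvec 2) x := by
          rw [hx, hdot_expand]
        rw [h1, hdot_comm (uvec 1) x, hdot_comm (uvec 2) x, hxu1, hxu2]
        ring
      have hxxpos : 0 < dot x x := by
        rw [hxx]
        rcases not_and_or.mp hp with h' | h'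
        · have hp1sq : 0 < p1^2 := lt_of_le_of_ne (sq_nonneg p1) (Ne.symm (pow_ne_zero 2 h'))
          have := mul_pos hp1sq hN2
          have h2 : 0 ≤ p2^2 * dot (uvec 1) (uvec 1) :=
            mul_nonneg (sq_nonneg _) (le_of_lt hN1)
          linarith
        · have hp2sq : 0 < p2^2 := lt_of_le_of_ne (sq_nonneg p2) (Ne.symm (pow_ne_zero 2 h'))
          have := mul_pos hp2sq hN1
          have h2 : 0 ≤ p1^2 * dot (uvec 2) (uvec 2) :=
            mul_nonneg (sq_nonneg _) (le_of_lt hN2)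
          linarith
      have hx0 : x ≠ 0 := by
        intro hzz
        rw [hzz] at hxxpos
        have : dot (0 : Fin (n+1) → ℝ) 0 = 0 := by
          rw [hdot]
          simp
        rw [this] at hxxpos
        exact lt_irrefl 0 hxxpos
      have hwx : dot w x = 0 := by
        have h1 : dot x w = p2 * dot (uvec 1) w - p1 * dot (uvec 2) w := by
          rw [hx, hdot_expand]
        rw [hdot_comm w x, h1, hdot_comm (uvec 1) w, hdot_comm (uvec 2) w, ← hp1, ← hp2]
        ring
      have hSx : S.mulVec x = p2 • S.mulVec (uvec 1) - p1 • S.mulVec (uvec 2) := by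
        rw [hx, Matrix.mulVec_sub, Matrix.mulVec_smul, Matrix.mulVec_smul]
      have hxSx : dot x (S.mulVec x)
          = p2^2 * lamf 1 * dot (uvec 1) (uvec 1) + p1^2 * lamf 2 * dot (uvec 2) (uvec 2) := by
        have h1 : dot x (S.mulVec x) = dot (S.mulVec x) x := hdot_comm _ _
        rw [h1, hSx, hdot_expand]
        have h2 : dot (S.mulVec (uvec 1)) x = dot x (S.mulVec (uvec 1)) := hdot_comm _ _
        have h3 : dot (S.mulVec (uvec 2)) x = dot x (S.mulVec (uvec 2)) := hdot_comm _ _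
        rw [h2, h3]
        have h4 : dot x (S.mulVec (uvec 1)) = p2 * lamf 1 * dot (uvec 1) (uvec 1) := by
          rw [hx, hdot_expand, hdotu 1 1, hdotu 1 2, hu2u1]
          ring
        have h5 : dot x (S.mulVec (uvec 2)) = - p1 * lamf 2 * dot (uvec 2) (uvec 2) := by
          rw [hx, hdot_expand, hdotu 2 1, hdotu 2 2, hu1u2]
          ring
        rw [h4, h5]
        ring
      refine ⟨x, hx0, hwx, ?_⟩
      rw [hxSx, hxx, hlamf1, hlamf2]
      have hkey : 0 ≤ p2^2 * dot (uvec 1) (uvec 1) * (lam1 - lam2) :=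
        mul_nonneg (mul_nonneg (sq_nonneg _) (le_of_lt hN1)) (by linarith)
      nlinarith [hkey]
  have hxx : 0 < dot x x := hdot_pos x hx0
  -- Euclidean space setup
  have hinner : ∀ u v : EuclideanSpace ℝ (Fin (n+1)), (inner ℝ u v : ℝ) = dot u v := by
    intro u v
    simp [PiLp.inner_apply, RCLike.inner_apply, hdot, mul_comm]
  set E : Submodule ℝ (EuclideanSpace ℝ (Fin (n+1))) := (ℝ ∙ (WithLp.toLp 2 w : EuclideanSpace ℝ (Fin (n+1))))ᗮ with hE
  have hmemE : ∀ v : EuclideanSpace ℝ (Fin (n+1)), v ∈ E ↔ dot w v = 0 := by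
    intro v
    rw [hE, Submodule.mem_orthogonal_singleton_iff_inner_right, hinner]
  set T : EuclideanSpace ℝ (Fin (n+1)) →ₗ[ℝ] EuclideanSpace ℝ (Fin (n+1)) :=
    { toFun := fun v => WithLp.toLp 2 (S.mulVec v)
      map_add' := fun u v => by ext; simp [Matrix.mulVec_add]
      map_smul' := fun c v => by ext; simp [Matrix.mulVec_smul] } with hT
  have hTapp : ∀ v : EuclideanSpace ℝ (Fin (n+1)), T v = S.mulVec v := fun v => rfl
  have hinvE : ∀ v ∈ E, T v ∈ E := by
    intro v hv
    rw [hmemE] at hv ⊢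
    rw [hTapp]
    have : dot w (S.mulVec v) = dot (S.mulVec w) v := hdsymm w v
    rw [this, hwS]
    have : dot ((β 0 : ℝ) • w) v = (β 0 : ℝ) * dot w v := by
      simp [hdot, Finset.mul_sum, mul_assoc]
    rw [this, hv, mul_zero]
  set Tres : E →ₗ[ℝ] E := T.restrict hinvE with hTres
  have hsymE : Tres.IsSymmetric := by
    intro p q
    rw [Submodule.coe_inner, Submodule.coe_inner]
    have h1 : ((Tres p : E) : EuclideanSpace ℝ (Fin (n+1))) = WithLp.toLp 2 (S.mulVec p.val) := rfl
    have h2 : ((Tres q : E) : EuclideanSpace ℝ (Fin (n+1))) = WithLp.toLp 2 (S.mulVec q.val) := rfl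
    rw [h1, h2, hinner, hinner]
    exact (hdsymm p.val q.val).symm
  have hxE : (WithLp.toLp 2 x : EuclideanSpace ℝ (Fin (n+1))) ∈ E := (hmemE (WithLp.toLp 2 x)).mpr hxw
  set xE : E := ⟨WithLp.toLp 2 x, hxE⟩ with hxE'
  have hxE0 : xE ≠ 0 := by
    intro h
    apply hx0
    have h' := congrArg (fun z : E => ((z : EuclideanSpace ℝ (Fin (n+1))).ofLp)) h
    simp only [ZeroMemClass.coe_zero, WithLp.ofLp_zero] at h'
    exact h'
  haveI : Nontrivial E := nontrivial_of_ne xE 0 hxE0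
  have h_ev := hsymE.hasEigenvalue_iSup_of_finiteDimensional
  set μ : ℝ := ⨆ ξ : { ξ : E // ξ ≠ 0 }, RCLike.re (inner ℝ (Tres ξ) (ξ : E) : ℝ) / ‖(ξ : E)‖ ^ 2
    with hμ
  -- lower bound for μ
  have hray_x : lam2 ≤ RCLike.re (inner ℝ (Tres xE) (xE : E) : ℝ) / ‖(xE : E)‖ ^ 2 := by
    have hnorm : ‖(xE : E)‖ ^ 2 = dot x x := by
      rw [← real_inner_self_eq_norm_sq, Submodule.coe_inner, hinner]
    have hinn : RCLike.re (inner ℝ (Tres xE) (xE : E) : ℝ) = dot x (S.mulVec x) := by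
      rw [RCLike.re_to_real, Submodule.coe_inner]
      have h1 : ((Tres xE : E) : EuclideanSpace ℝ (Fin (n+1))) = WithLp.toLp 2 (S.mulVec x) := rfl
      rw [h1, hinner]
      exact (hdsymm x x).symm
    rw [hnorm, hinn, le_div_iff₀ hxx]
    exact hxS
  have hbdd : BddAbove (Set.range fun ξ : { ξ : E // ξ ≠ 0 } =>
      RCLike.re (inner ℝ (Tres ξ) (ξ : E) : ℝ) / ‖(ξ : E)‖ ^ 2) := by
    set C := ‖(LinearMap.toContinuousLinearMap Tres)‖ with hC
    refine ⟨C, ?_⟩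
    rintro z ⟨ξ, rfl⟩
    have hξ0 : 0 < ‖(ξ : E)‖ := norm_pos_iff.mpr (by exact_mod_cast ξ.2)
    have h1 : RCLike.re (inner ℝ (Tres ξ) (ξ : E) : ℝ) ≤ ‖Tres ξ‖ * ‖(ξ : E)‖ := by
      rw [RCLike.re_to_real]
      exact real_inner_le_norm _ _
    have h2 : ‖Tres ξ‖ ≤ C * ‖(ξ : E)‖ := by
      rw [hC]
      have := (LinearMap.toContinuousLinearMap Tres).le_opNorm (ξ : E)
      simpa using this
    rw [div_le_iff₀ (by positivity)]
    calc RCLike.re (inner ℝ (Tres ξ) (ξ : E) : ℝ) ≤ ‖Tres ξ‖ * ‖(ξ : E)‖ := h1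
      _ ≤ (C * ‖(ξ : E)‖) * ‖(ξ : E)‖ := by
          apply mul_le_mul_of_nonneg_right h2 (norm_nonneg _)
      _ = C * ‖(ξ : E)‖ ^ 2 := by ring
  have hμ_ge : lam2 ≤ μ := le_trans hray_x (le_ciSup hbdd ⟨xE, hxE0⟩)
  -- eigenvector for μ
  obtain ⟨v, hv⟩ := h_ev.exists_hasEigenvector
  set y : Fin (n+1) → ℝ := WithLp.ofLp v.val with hy
  have hvS : S.mulVec y = μ • y := by
    have h0 := hv.apply_eq_smul
    have h1 := congrArg (fun z : E => ((z : EuclideanSpace ℝ (Fin (n+1))).ofLp)) h0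
    exact h1
  have hv0 : y ≠ 0 := fun h => hv.right (Subtype.ext (WithLp.ofLp_injective 2 (by rw [ZeroMemClass.coe_zero, WithLp.ofLp_zero]; exact h)))
  have hvw : dot w y = 0 := (hmemE _).mp v.2
  -- transfer to L
  set u : Fin (n+1) → ℝ := fun j => (d (j:ℕ))⁻¹ * y j with hu
  have huL : L.mulVec u = μ • u := htrans μ y hvS
  have hu0 : u ≠ 0 := by
    intro h
    apply hv0
    funext j
    have hj := congrFun h j
    have : (d (j:ℕ))⁻¹ * y j = 0 := hj
    rcases mul_eq_zero.mp this with h' | h'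
    · exact absurd (inv_eq_zero.mp h') (hdne j)
    · exact h'
  have hμβ : μ ≤ (β 0 : ℝ) := hbound μ u hu0 huL
  have hμne : μ ≠ (β 0 : ℝ) := by
    intro h
    rw [h] at huL
    have hconst := hsimple u huL
    have hyw : ∀ j : Fin (n+1), y j = u 0 * w j := by
      intro j
      have h1 : u j = u 0 := hconst j
      have h2 : y j = d (j:ℕ) * u j := by
        rw [hu]
        rw [← mul_assoc, mul_inv_cancel₀ (hdne j), one_mul]
      rw [h2, h1, hw]
      ring
    have : dot w y = u 0 * dot w w := by
      rw [hdot]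
      simp only [hyw]
      rw [Finset.mul_sum]
      congr 1; funext j; ring
    rw [hvw] at this
    have hwone : w 0 = 1 := by simp [hw, hd]
    have hww : 0 < dot w w := hdot_pos w (fun hz => by
      have h0 := congrFun hz (0 : Fin (n+1))
      rw [hwone] at h0
      simp at h0)
    have hu00 : u 0 = 0 := by
      rcases mul_eq_zero.mp this.symm with h' | h'
      · exact h'
      · exact absurd h' (ne_of_gt hww)
    apply hu0
    funext j
    rw [hconst j, hu00]
    rfl
  refine ⟨μ, ?_, ?_, lt_of_le_of_ne hμβ hμne⟩
  · apply Module.End.hasEigenvalue_of_hasEigenvector (x := u)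
    constructor
    · rw [Module.End.mem_eigenspace_iff, Matrix.toLin'_apply]
      exact huL
    · exact hu0
  · calc (α i₀ : ℝ) + 2 * Real.sqrt ((β i₀ : ℝ) * (γ i₀ : ℝ)) * Real.cos (2 * π / (ℓ + 1))
        = lam2 := by rw [hlam2, hr, hm]
      _ ≤ μ := hμ_ge
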